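/- Let $m : [0,T] \to [0,\infty)$ be Lebesgue integrable and let $x : [0,T] \to [0,\infty)$ be a function such that for every $t \in [0,T]$, $\tfrac{1}{2}x(t)^2 \leq \tfrac{1}{2}a^2 + \int_{(0,t]} m(s)x(s)\,ds$ where $a \geq 0$ and $x$ is bounded (e.g. of bounded variation). Then for every $t \in [0,T]$, $x(t) \leq a + \int_{(0,t]} m(s)\,ds$. -/

import Mathlib

open MeasureTheory Set

lemma primitive_fubini (τ : ℝ) (m : ℝ → ℝ)
    (hm : IntegrableOn m (Set.Ioc 0 τ)) :
    2 * ∫ s in Set.Ioc 0 τ, m s * ∫ u in Set.Ioc 0 s, m u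
      = (∫ s in Set.Ioc 0 τ, m s) ^ 2 := by
  set M : ℝ → ℝ := fun s => ∫ u in Set.Ioc 0 s, m u with hMdef
  set ν : Measure ℝ := volume.restrict (Set.Ioc 0 τ) with hν
  have hmi : Integrable m ν := hm
  have hf : Integrable (fun p : ℝ × ℝ => m p.1 * m p.2) (ν.prod ν) := hmi.mul_prod hmi
  -- generic computation of indicator integrals
  have key : ∀ (S : Set (ℝ × ℝ)), MeasurableSet S →
      ∀ (I : ℝ → Set ℝ), (∀ s, MeasurableSet (I s)) →
      (∀ s u : ℝ, ((s, u) ∈ S ↔ u ∈ I s)) →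
      (∀ s ∈ Set.Ioc (0:ℝ) τ, ∫ u in Set.Ioc 0 τ ∩ I s, m u = M s) →
      ∫ p, S.indicator (fun p : ℝ × ℝ => m p.1 * m p.2) p ∂(ν.prod ν)
        = ∫ s in Set.Ioc 0 τ, m s * M s := by
    intro S hS I hI hmem hinner
    rw [integral_prod _ (hf.indicator hS)]
    refine setIntegral_congr_fun measurableSet_Ioc (fun s hs => ?_)
    have h1 : (fun u => S.indicator (fun p : ℝ × ℝ => m p.1 * m p.2) (s, u))
        = (I s).indicator (fun u => m s * m u) := by
      funext u
      by_cases h : u ∈ I s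
      · rw [Set.indicator_of_mem ((hmem s u).2 h), Set.indicator_of_mem h]
      · rw [Set.indicator_of_notMem (fun hh => h ((hmem s u).1 hh)),
          Set.indicator_of_notMem h]
    rw [h1, setIntegral_indicator (hI s), integral_const_mul, hinner s hs]
  -- nonstrict version
  have hA : ∫ p, {p : ℝ × ℝ | p.2 ≤ p.1}.indicator (fun p : ℝ × ℝ => m p.1 * m p.2) p ∂(ν.prod ν)
      = ∫ s in Set.Ioc 0 τ, m s * M s := by
    refine key _ (measurableSet_le measurable_snd measurable_fst) (fun s => Set.Iic s)
      (fun s => measurableSet_Iic) (fun s u => Iff.rfl) (fun s hs => ?_)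
    rw [Set.Ioc_inter_Iic, min_eq_right hs.2]
  -- strict version
  have hB : ∫ p, {p : ℝ × ℝ | p.2 < p.1}.indicator (fun p : ℝ × ℝ => m p.1 * m p.2) p ∂(ν.prod ν)
      = ∫ s in Set.Ioc 0 τ, m s * M s := by
    refine key _ (measurableSet_lt measurable_snd measurable_fst) (fun s => Set.Iio s)
      (fun s => measurableSet_Iio) (fun s u => Iff.rfl) (fun s hs => ?_)
    have hset : Set.Ioc (0:ℝ) τ ∩ Set.Iio s = Set.Ioo 0 s := by
      ext u
      exact ⟨fun h => ⟨h.1.1, h.2⟩, fun h => ⟨⟨h.1, h.2.le.trans hs.2⟩, h.2⟩⟩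
    rw [hset, ← integral_Ioc_eq_integral_Ioo]
  -- swap: complement of nonstrict equals strict
  have hswap : ∫ p, ({p : ℝ × ℝ | p.2 ≤ p.1}ᶜ).indicator (fun p : ℝ × ℝ => m p.1 * m p.2) p ∂(ν.prod ν)
      = ∫ p, {p : ℝ × ℝ | p.2 < p.1}.indicator (fun p : ℝ × ℝ => m p.1 * m p.2) p ∂(ν.prod ν) := by
    have heq : ({p : ℝ × ℝ | p.2 ≤ p.1}ᶜ).indicator (fun p : ℝ × ℝ => m p.1 * m p.2)
        = fun z : ℝ × ℝ => ({p : ℝ × ℝ | p.2 < p.1}.indicator (fun p : ℝ × ℝ => m p.1 * m p.2)) z.swap := by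
      funext z
      simp only [Set.indicator_apply, Set.mem_compl_iff, Set.mem_setOf_eq, Prod.fst_swap,
        Prod.snd_swap, not_le, mul_comm]
    rw [heq, integral_prod_swap]
  -- total
  have htot : ∫ p, (fun p : ℝ × ℝ => m p.1 * m p.2) p ∂(ν.prod ν)
      = (∫ s in Set.Ioc 0 τ, m s) ^ 2 := by
    rw [integral_prod_mul]; ring
  have hi1 := hf.indicator (measurableSet_le measurable_snd measurable_fst)
  have hi2 := hf.indicator (measurableSet_le measurable_snd measurable_fst).compl
  have h2 : ∫ p : ℝ × ℝ, ({p : ℝ × ℝ | p.2 ≤ p.1}.indicator (fun p : ℝ × ℝ => m p.1 * m p.2) p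
      + ({p : ℝ × ℝ | p.2 ≤ p.1}ᶜ).indicator (fun p : ℝ × ℝ => m p.1 * m p.2) p) ∂(ν.prod ν)
      = (∫ s in Set.Ioc 0 τ, m s) ^ 2 := by
    simp only [Set.indicator_self_add_compl_apply]
    exact htot
  rw [integral_add hi1 hi2, hA, hswap, hB] at h2
  show 2 * (∫ s in Set.Ioc 0 τ, m s * M s) = (∫ s in Set.Ioc 0 τ, m s) ^ 2
  linarith

open MeasureTheory

/-- Quadratic Gronwall-type lemma (Tolstonogov, Lemma 2.8). -/
theorem quadratic_gronwall (T a : ℝ) (hT : 0 < T) (ha : 0 ≤ a) (m x : ℝ → ℝ)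
    (hm : IntegrableOn m (Set.Icc 0 T)) (hm0 : ∀ t ∈ Set.Icc 0 T, 0 ≤ m t)
    (hx0 : ∀ t ∈ Set.Icc 0 T, 0 ≤ x t) (hxmeas : Measurable x)
    (hxbdd : ∃ C : ℝ, ∀ t ∈ Set.Icc 0 T, x t ≤ C)
    (hineq : ∀ t ∈ Set.Icc 0 T,
      (1 / 2) * x t ^ 2 ≤ (1 / 2) * a ^ 2 + ∫ s in Set.Ioc 0 t, m s * x s) :
    ∀ t ∈ Set.Icc 0 T, x t ≤ a + ∫ s in Set.Ioc 0 t, m s := by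
  obtain ⟨C0, hC0⟩ := hxbdd
  set C : ℝ := max C0 1 with hCdef
  have hC1 : (0:ℝ) < C := lt_of_lt_of_le one_pos (le_max_right _ _)
  have hCx : ∀ t ∈ Set.Icc 0 T, x t ≤ C := fun t ht => (hC0 t ht).trans (le_max_left _ _)
  set M : ℝ → ℝ := fun t => ∫ s in Set.Ioc 0 t, m s with hMdef
  have hsub : ∀ {t : ℝ}, t ∈ Set.Icc 0 T → Set.Ioc 0 t ⊆ Set.Icc 0 T :=
    fun ht u hu => ⟨hu.1.le, hu.2.trans ht.2⟩
  have hmIoc : ∀ {t : ℝ}, t ∈ Set.Icc 0 T → IntegrableOn m (Set.Ioc 0 t) :=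
    fun ht => hm.mono_set (hsub ht)
  -- integrability of m * x
  have hmx : IntegrableOn (fun s => m s * x s) (Set.Icc 0 T) := by
    have hb : ∀ᵐ s ∂(volume.restrict (Set.Icc 0 T)), ‖x s‖ ≤ C := by
      filter_upwards [ae_restrict_mem measurableSet_Icc] with s hs
      rw [Real.norm_eq_abs, abs_of_nonneg (hx0 s hs)]
      exact hCx s hs
    have h1 : Integrable (fun s => x s * m s) (volume.restrict (Set.Icc 0 T)) :=
      hm.bdd_mul hxmeas.aestronglyMeasurable.restrict hb
    exact h1.congr (Filter.Eventually.of_forall fun s => mul_comm _ _)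
  have hmxIoc : ∀ {t : ℝ}, t ∈ Set.Icc 0 T → IntegrableOn (fun s => m s * x s) (Set.Ioc 0 t) :=
    fun ht => hmx.mono_set (hsub ht)
  -- properties of M
  have hMc : ContinuousOn M (Set.Icc 0 T) := intervalIntegral.continuousOn_primitive hm
  have hMnn : ∀ {t : ℝ}, t ∈ Set.Icc 0 T → 0 ≤ M t := fun {t} ht =>
    setIntegral_nonneg measurableSet_Ioc (fun s hs => hm0 s (hsub ht hs))
  have hMmono : ∀ {s t : ℝ}, s ∈ Set.Icc 0 T → t ∈ Set.Icc 0 T → s ≤ t → M s ≤ M t := by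
    intro s t hs ht hst
    refine setIntegral_mono_set (hmIoc ht) ?_ (Set.Ioc_subset_Ioc_right hst).eventuallyLE
    exact (ae_restrict_iff' measurableSet_Ioc).mpr
      (Filter.Eventually.of_forall fun u hu => hm0 u (hsub ht hu))
  have hMadd : ∀ {σ t : ℝ}, 0 ≤ σ → σ ≤ t → t ∈ Set.Icc 0 T →
      M t = M σ + ∫ s in Set.Ioc σ t, m s := by
    intro σ t hσ hσt ht
    have hσI : σ ∈ Set.Icc (0:ℝ) T := ⟨hσ, hσt.trans ht.2⟩
    rw [hMdef]
    show (∫ s in Set.Ioc 0 t, m s) = _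
    rw [← Set.Ioc_union_Ioc_eq_Ioc hσ hσt,
      setIntegral_union (Set.Ioc_disjoint_Ioc_of_le le_rfl) measurableSet_Ioc (hmIoc hσI)
        (hm.mono_set fun u hu => ⟨hσ.trans hu.1.le, hu.2.trans ht.2⟩)]
  have hmxadd : ∀ {σ t : ℝ}, 0 ≤ σ → σ ≤ t → t ∈ Set.Icc 0 T →
      (∫ s in Set.Ioc 0 t, m s * x s)
        = (∫ s in Set.Ioc 0 σ, m s * x s) + ∫ s in Set.Ioc σ t, m s * x s := by
    intro σ t hσ hσt ht
    have hσI : σ ∈ Set.Icc (0:ℝ) T := ⟨hσ, hσt.trans ht.2⟩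
    rw [← Set.Ioc_union_Ioc_eq_Ioc hσ hσt,
      setIntegral_union (Set.Ioc_disjoint_Ioc_of_le le_rfl) measurableSet_Ioc (hmxIoc hσI)
        (hmx.mono_set fun u hu => ⟨hσ.trans hu.1.le, hu.2.trans ht.2⟩)]
  -- integrability of m * M
  have hmM : ∀ {t : ℝ}, t ∈ Set.Icc 0 T → IntegrableOn (fun s => m s * M s) (Set.Ioc 0 t) := by
    intro t ht
    have hMb : ∀ᵐ s ∂(volume.restrict (Set.Ioc 0 t)), ‖M s‖ ≤ M T := by
      filter_upwards [ae_restrict_mem measurableSet_Ioc] with s hs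
      have hsI : s ∈ Set.Icc (0:ℝ) T := hsub ht hs
      rw [Real.norm_eq_abs, abs_of_nonneg (hMnn hsI)]
      exact hMmono hsI ⟨le_refl 0 |>.trans hT.le, le_refl T⟩ hsI.2
    have hMm : AEStronglyMeasurable M (volume.restrict (Set.Ioc 0 t)) :=
      (hMc.mono (hsub ht)).aestronglyMeasurable measurableSet_Ioc
    have h1 : Integrable (fun s => M s * m s) (volume.restrict (Set.Ioc 0 t)) :=
      (hmIoc ht).bdd_mul hMm hMb
    exact h1.congr (Filter.Eventually.of_forall fun s => mul_comm _ _)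
  -- main claim with an epsilon of room
  have claim : ∀ ε : ℝ, 0 < ε → ∀ t ∈ Set.Icc 0 T, x t ≤ a + M t + ε := by
    intro ε hε
    by_contra hcon
    push_neg at hcon
    obtain ⟨t₀, ht₀, hlt₀⟩ := hcon
    set S : Set ℝ := {t | t ∈ Set.Icc 0 T ∧ a + M t + ε < x t} with hSdef
    have hSne : S.Nonempty := ⟨t₀, ht₀, hlt₀⟩
    have hSbd : BddBelow S := ⟨0, fun t ht => ht.1.1⟩
    set τ : ℝ := sInf S with hτdef
    have hτ0 : 0 ≤ τ := le_csInf hSne fun t ht => ht.1.1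
    have hτT : τ ≤ T := by
      obtain ⟨t1, ht1⟩ := hSne
      exact (csInf_le hSbd ht1).trans ht1.1.2
    have hτIcc : τ ∈ Set.Icc (0:ℝ) T := ⟨hτ0, hτT⟩
    have hbefore : ∀ s, s ∈ Set.Ioo (0:ℝ) τ → x s ≤ a + M s + ε := by
      intro s hs
      by_contra hxs
      push_neg at hxs
      have hsS : s ∈ S := ⟨⟨hs.1.le, hs.2.le.trans hτT⟩, hxs⟩
      exact absurd (csInf_le hSbd hsS) (not_le.mpr hs.2)
    -- key estimate for points in S
    have hkey : ∀ t ∈ S, ε ^ 2 ≤ 2 * C * (M t - M τ) := by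
      intro t htS
      obtain ⟨htI, hxt⟩ := htS
      have hτt : τ ≤ t := csInf_le hSbd ⟨htI, hxt⟩
      have hnn : 0 ≤ a + M t + ε := by
        have := hMnn htI; linarith
      have h1 : (a + M t + ε) ^ 2 ≤ x t ^ 2 := pow_le_pow_left₀ hnn hxt.le 2
      have h2 : x t ^ 2 ≤ a ^ 2 + 2 * ∫ s in Set.Ioc 0 t, m s * x s := by
        have := hineq t htI; linarith
      -- split the integral
      have h3 := hmxadd hτ0 hτt htI
      -- first piece
      have hMτint : IntegrableOn (fun s => m s * (a + M s + ε)) (Set.Ioo 0 τ) := by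
        have hint : IntegrableOn (fun s => (a + ε) * m s + m s * M s) (Set.Ioc 0 τ) :=
          ((hmIoc hτIcc).const_mul (a + ε)).add (hmM hτIcc)
        exact (hint.mono_set Set.Ioo_subset_Ioc_self).congr
          (Filter.Eventually.of_forall fun s => by ring)
      have h4 : (∫ s in Set.Ioc 0 τ, m s * x s)
          ≤ (a + ε) * M τ + (M τ) ^ 2 / 2 := by
        have e1 : (∫ s in Set.Ioc 0 τ, m s * x s) = ∫ s in Set.Ioo 0 τ, m s * x s :=
          integral_Ioc_eq_integral_Ioo
        have e2 : (∫ s in Set.Ioo 0 τ, m s * x s)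
            ≤ ∫ s in Set.Ioo 0 τ, m s * (a + M s + ε) := by
          refine setIntegral_mono_on ((hmxIoc hτIcc).mono_set Set.Ioo_subset_Ioc_self)
            hMτint measurableSet_Ioo (fun s hs => ?_)
          have hsI : s ∈ Set.Icc (0:ℝ) T := ⟨hs.1.le, hs.2.le.trans hτT⟩
          exact mul_le_mul_of_nonneg_left (hbefore s hs) (hm0 s hsI)
        have e3 : (∫ s in Set.Ioo 0 τ, m s * (a + M s + ε))
            = ∫ s in Set.Ioc 0 τ, m s * (a + M s + ε) :=
          integral_Ioc_eq_integral_Ioo.symm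
        have e4 : (∫ s in Set.Ioc 0 τ, m s * (a + M s + ε))
            = (a + ε) * M τ + ∫ s in Set.Ioc 0 τ, m s * M s := by
          have : (∫ s in Set.Ioc 0 τ, m s * (a + M s + ε))
              = ∫ s in Set.Ioc 0 τ, ((a + ε) * m s + m s * M s) :=
            setIntegral_congr_fun measurableSet_Ioc (fun s _ => by ring)
          rw [this, integral_add ((hmIoc hτIcc).const_mul (a + ε)) (hmM hτIcc),
            integral_const_mul]
        have e5 : 2 * ∫ s in Set.Ioc 0 τ, m s * M s = (M τ) ^ 2 :=
          primitive_fubini τ m (hmIoc hτIcc)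
        have e6 : (∫ s in Set.Ioc 0 τ, m s * M s) = (M τ) ^ 2 / 2 := by linarith
        rw [e1]
        calc (∫ s in Set.Ioo 0 τ, m s * x s)
            ≤ ∫ s in Set.Ioo 0 τ, m s * (a + M s + ε) := e2
          _ = (a + ε) * M τ + (M τ) ^ 2 / 2 := by rw [e3, e4, e6]
      -- second piece
      have h5 : (∫ s in Set.Ioc τ t, m s * x s) ≤ C * (M t - M τ) := by
        have hsub2 : Set.Ioc τ t ⊆ Set.Icc 0 T :=
          fun u hu => ⟨hτ0.trans hu.1.le, hu.2.trans htI.2⟩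
        have e1 : (∫ s in Set.Ioc τ t, m s * x s) ≤ ∫ s in Set.Ioc τ t, m s * C := by
          refine setIntegral_mono_on (hmx.mono_set hsub2)
            ((hm.mono_set hsub2).mul_const C) measurableSet_Ioc (fun s hs => ?_)
          exact mul_le_mul_of_nonneg_left (hCx s (hsub2 hs)) (hm0 s (hsub2 hs))
        have e2 : (∫ s in Set.Ioc τ t, m s * C) = (∫ s in Set.Ioc τ t, m s) * C :=
          integral_mul_const C m
        have e3 : (∫ s in Set.Ioc τ t, m s) = M t - M τ := by
          have := hMadd hτ0 hτt htI; linarith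
        rw [e2, e3] at e1
        linarith
      have hmono : M τ ≤ M t := hMmono hτIcc htI hτt
      have hMτnn : 0 ≤ M τ := hMnn hτIcc
      have hMtnn : 0 ≤ M t := hMnn htI
      nlinarith [mul_nonneg (sub_nonneg.2 hmono) (add_nonneg hMτnn hMtnn),
        mul_nonneg ha hε.le, mul_nonneg (sub_nonneg.2 hmono) hε.le,
        mul_nonneg (sub_nonneg.2 hmono) ha]
    -- contradiction via continuity of M at τ
    have hδ : 0 < ε ^ 2 / (2 * C) := by positivity
    have hev : ∀ᶠ s in nhdsWithin τ (Set.Icc 0 T), M s < M τ + ε ^ 2 / (2 * C) :=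
      (hMc τ hτIcc) (Iio_mem_nhds (by linarith))
    rw [eventually_nhdsWithin_iff, Metric.eventually_nhds_iff] at hev
    obtain ⟨η, hη, hball⟩ := hev
    obtain ⟨t2, ht2S, ht2lt⟩ := (csInf_lt_iff hSbd hSne).mp (by linarith : sInf S < τ + η)
    have hτt2 : τ ≤ t2 := csInf_le hSbd ht2S
    have hdist : dist t2 τ < η := by
      rw [Real.dist_eq, abs_of_nonneg (by linarith)]
      linarith
    have hlt : M t2 < M τ + ε ^ 2 / (2 * C) := hball hdist ht2S.1
    have hge := hkey t2 ht2S
    have h8 : M t2 - M τ < ε ^ 2 / (2 * C) := by linarith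
    have h9 : 2 * C * (M t2 - M τ) < ε ^ 2 := by
      calc 2 * C * (M t2 - M τ) < 2 * C * (ε ^ 2 / (2 * C)) :=
            mul_lt_mul_of_pos_left h8 (by positivity)
        _ = ε ^ 2 := by field_simp
    linarith
  -- conclude
  intro t ht
  by_contra hfin
  push_neg at hfin
  have hε : 0 < (x t - (a + M t)) / 2 := by linarith
  have := claim _ hε t ht
  simp only [hMdef] at this
  linarith
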